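/- Let X be a first-countable topological space, I an open relation on X, K the smallest closed transitive relation containing I. Let γ : [0,1] → X be continuous with points 0 = t₀ < t₁ < ... < t_{r+1} = 1 such that for each j, and for all s, t with t_j < s < t < t_{j+1}, (γ(s), γ(t)) ∈ some relation J ⊆ K. Then (γ(0), γ(1)) ∈ K. -/

import Mathlib

/-- A relation (as a set of pairs) is transitive. -/
def TransRel {X : Type*} (S : Set (X × X)) : Prop :=
  ∀ a b c : X, (a, b) ∈ S → (b, c) ∈ S → (a, c) ∈ S

/-- The smallest closed transitive relation containing `I`. -/
def kClosure {X : Type*} [TopologicalSpace X] (I : Set (X × X)) : Set (X × X) :=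
  ⋂₀ {S : Set (X × X) | IsClosed S ∧ TransRel S ∧ I ⊆ S}

/-- a continuous curve whose open segments between the
subdivision points `0 = t₀ < … < t_{r+1} = 1` are pairwise `J`-related, with
`J ⊆ K`, has its endpoints `K`-related. -/
theorem stmt19 {X : Type*} [TopologicalSpace X] [FirstCountableTopology X]
    (I : Set (X × X)) (hIopen : IsOpen I)
    (K : Set (X × X)) (hK : K = kClosure I)
    (J : Set (X × X)) (hJK : J ⊆ K)
    (γ : ℝ → X) (hγ : Continuous γ)
    (r : ℕ) (t : Fin (r + 2) → ℝ) (hmono : StrictMono t)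
    (h0 : t 0 = 0) (h1 : t (Fin.last (r + 1)) = 1)
    (hseg : ∀ j : Fin (r + 1), ∀ s u : ℝ,
      t j.castSucc < s → s < u → u < t j.succ → (γ s, γ u) ∈ J) :
    (γ 0, γ 1) ∈ K := by
  have hKclosed : IsClosed K := by
    rw [hK, kClosure]
    exact isClosed_sInter fun S hS => hS.1
  have hKtrans : TransRel K := by
    rw [hK]
    intro a b c hab hbc S hS
    exact hS.2.1 a b c (hab S hS) (hbc S hS)
  -- step: each segment's endpoints are K-related
  have hstep : ∀ j : Fin (r + 1), (γ (t j.castSucc), γ (t j.succ)) ∈ K := by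
    intro j
    set a := t j.castSucc with ha
    set b := t j.succ with hb
    have hab : a < b := hmono (Fin.castSucc_lt_succ : j.castSucc < j.succ)
    have hd : (0:ℝ) < b - a := by linarith
    set s : ℕ → ℝ := fun m => a + (b - a) / (m + 3) with hs
    set u : ℕ → ℝ := fun m => b - (b - a) / (m + 3) with hu
    have hpos : ∀ m : ℕ, (0:ℝ) < (m:ℝ) + 3 := by
      intro m; positivity
    have hmem : ∀ m : ℕ, (γ (s m), γ (u m)) ∈ J := by
      intro m
      apply hseg j
      · have : 0 < (b - a) / ((m:ℝ) + 3) := div_pos hd (hpos m)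
        simp only [hs]; linarith
      · have h1 : (b - a) / ((m:ℝ) + 3) ≤ (b - a) / 3 := by
          apply div_le_div_of_nonneg_left hd.le (by norm_num)
          have : (0:ℝ) ≤ (m:ℝ) := Nat.cast_nonneg m
          linarith
        simp only [hs, hu]; linarith
      · have : 0 < (b - a) / ((m:ℝ) + 3) := div_pos hd (hpos m)
        simp only [hu]; linarith
    have hlim0 : Filter.Tendsto (fun m : ℕ => (b - a) / ((m:ℝ) + 3)) Filter.atTop (nhds 0) := by
      apply Filter.Tendsto.div_atTop tendsto_const_nhds
      exact Filter.tendsto_atTop_add_const_right _ 3 tendsto_natCast_atTop_atTop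
    have hslim : Filter.Tendsto s Filter.atTop (nhds a) := by
      have := Filter.Tendsto.const_add a hlim0
      simpa using this
    have hulim : Filter.Tendsto u Filter.atTop (nhds b) := by
      have := Filter.Tendsto.const_sub b hlim0
      simpa using this
    have htend : Filter.Tendsto (fun m => (γ (s m), γ (u m))) Filter.atTop
        (nhds (γ a, γ b)) :=
      ((hγ.tendsto a).comp hslim).prodMk_nhds ((hγ.tendsto b).comp hulim)
    exact hKclosed.mem_of_tendsto htend
      (Filter.Eventually.of_forall fun m => hJK (hmem m))
  -- chain by transitivity
  have hchain : ∀ k : ℕ, ∀ hk : k + 1 < r + 2,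
      (γ (t 0), γ (t ⟨k + 1, hk⟩)) ∈ K := by
    intro k
    induction k with
    | zero =>
      intro hk
      have := hstep ⟨0, Nat.succ_pos r⟩
      simpa [Fin.castSucc, Fin.succ, show (Fin.castAdd 1 (0 : Fin (r+1)) : Fin (r+2)) = 0 from Fin.ext (by simp)] using this
    | succ n ih =>
      intro hk
      have hn : n + 1 < r + 2 := Nat.lt_of_succ_lt hk
      have hnr : n + 1 < r + 1 := Nat.lt_of_succ_lt_succ hk
      have h2 := hstep ⟨n + 1, hnr⟩
      have hc : (Fin.castSucc ⟨n + 1, hnr⟩ : Fin (r + 2)) = ⟨n + 1, hn⟩ := rfl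
      have hsu : (Fin.succ ⟨n + 1, hnr⟩ : Fin (r + 2)) = ⟨n + 2, hk⟩ := rfl
      rw [hc, hsu] at h2
      exact hKtrans _ _ _ (ih hn) h2
  have hfinal := hchain r (by omega)
  have hlast : (Fin.last (r + 1) : Fin (r + 2)) = ⟨r + 1, by omega⟩ := rfl
  rw [← h0, ← h1, hlast]
  exact hfinal
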